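/- For n ≥ 2 identical linear servers and any attack strength α ≥ 0, every fully selfish equilibrium x̂ satisfies x̂_1 = max{ 1 − α(n−1)/n, 0 }, x̂_i = (n − x̂_1)/(n−1) for all i > 1, and has cost C^α(x̂) = min{ n/(n−1), 1 + α/n }. -/

import Mathlib

open Finset

/-- System cost `C^α(x) = (1/n) ∑ᵢ xᵢ τᵢ(xᵢ) + α x₁ / n` (server 1 is index 0). -/
noncomputable def cost (n : ℕ) [NeZero n] (τ : Fin n → ℝ → ℝ) (α : ℝ) (x : Fin n → ℝ) : ℝ :=
  (∑ i, x i * τ i (x i)) / (n : ℝ) + α * x 0 / (n : ℝ)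

/-- Attacked delay functions: `τ₁^α = τ₁ + α`, `τᵢ^α = τᵢ` for `i > 1`. -/
noncomputable def tauA (n : ℕ) [NeZero n] (τ : Fin n → ℝ → ℝ) (α : ℝ) (i : Fin n) (z : ℝ) : ℝ :=
  τ i z + if i = 0 then α else 0

/-- A (partial) scheduling profile of total mass `mass`: nonnegative with entries summing to `mass`. -/
def IsProfile (n : ℕ) (mass : ℝ) (x : Fin n → ℝ) : Prop :=
  (∀ i, 0 ≤ x i) ∧ ∑ i, x i = mass

/-- Identical linear delay functions `τᵢ(x) = x`. -/
def lin (n : ℕ) : Fin n → ℝ → ℝ := fun _ z => z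

/-- A fully selfish equilibrium: a scheduling profile of total mass `n` in which every
job with positive mass is on a server of minimal (attacked) delay. -/
def IsSelfishEq (n : ℕ) [NeZero n] (α : ℝ) (x : Fin n → ℝ) : Prop :=
  IsProfile n (n : ℝ) x ∧
  ∀ i, 0 < x i → ∀ j, tauA n (lin n) α i (x i) ≤ tauA n (lin n) α j (x j)

set_option maxHeartbeats 1000000 in
/-- for identical linear servers, every fully selfish equilibrium has
`x̂₁ = max {1 − α(n−1)/n, 0}`, the rest split evenly, and cost
`min {n/(n−1), 1 + α/n}`. -/
theorem selfish_equilibrium_characterization (n : ℕ) [NeZero n] (hn : 2 ≤ n)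
    (α : ℝ) (hα : 0 ≤ α) (x : Fin n → ℝ) (hx : IsSelfishEq n α x) :
    x 0 = max (1 - α * ((n : ℝ) - 1) / n) 0 ∧
    (∀ i : Fin n, i ≠ 0 → x i = ((n : ℝ) - x 0) / ((n : ℝ) - 1)) ∧
    cost n (lin n) α x = min ((n : ℝ) / ((n : ℝ) - 1)) (1 + α / n) := by
  obtain ⟨⟨hpos, hsum⟩, heq⟩ := hx
  have hn' : (2 : ℝ) ≤ (n : ℝ) := by exact_mod_cast hn
  have hn0 : (n : ℝ) ≠ 0 := by linarith
  have hn1 : (n : ℝ) - 1 ≠ 0 := by linarith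
  set i1 : Fin n := ⟨1, by omega⟩ with hi1def
  have hi1 : i1 ≠ 0 := by
    simp [hi1def, Fin.ext_iff]
  -- positive off-servers have minimal load among off-servers
  have key : ∀ i j : Fin n, i ≠ 0 → j ≠ 0 → 0 < x i → x i ≤ x j := by
    intro i j hi hj hxi
    have := heq i hxi j
    simpa [tauA, lin, hi, hj] using this
  have hy : ∀ i : Fin n, i ≠ 0 → x i = x i1 := by
    intro i hi
    rcases (hpos i).lt_or_eq with h | h
    · rcases (hpos i1).lt_or_eq with h1 | h1
      · exact le_antisymm (key i i1 hi hi1 h) (key i1 i hi1 hi h1)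
      · have := key i i1 hi hi1 h
        linarith
    · rcases (hpos i1).lt_or_eq with h1 | h1
      · have := key i1 i hi1 hi h1
        linarith
      · rw [← h, ← h1]
  have hcard : (univ.erase (0 : Fin n)).card = n - 1 := by
    simp [Finset.card_erase_of_mem]
  have hcast : ((n - 1 : ℕ) : ℝ) = (n : ℝ) - 1 := by
    have : 1 ≤ n := by omega
    push_cast [this]
    ring
  have hsum' : x 0 + ((n : ℝ) - 1) * x i1 = n := by
    have h1 : ∑ i ∈ univ.erase (0 : Fin n), x i = ((n : ℝ) - 1) * x i1 := by
      rw [Finset.sum_congr rfl (fun i hi => hy i (Finset.ne_of_mem_erase hi)),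
        Finset.sum_const, hcard, nsmul_eq_mul, hcast]
    have h2 := Finset.sum_erase_add univ x (Finset.mem_univ (0 : Fin n))
    rw [h1, hsum] at h2
    linarith
  have hsq : ∑ i, x i * x i = x 0 * x 0 + ((n : ℝ) - 1) * (x i1 * x i1) := by
    have h1 : ∑ i ∈ univ.erase (0 : Fin n), x i * x i
        = ((n : ℝ) - 1) * (x i1 * x i1) := by
      rw [Finset.sum_congr rfl (fun i hi => by rw [hy i (Finset.ne_of_mem_erase hi)]),
        Finset.sum_const, hcard, nsmul_eq_mul, hcast]
    have h2 := Finset.sum_erase_add univ (fun i => x i * x i) (Finset.mem_univ (0 : Fin n))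
    rw [h1] at h2
    linarith
  have hypos : 0 < x i1 := by
    rcases (hpos i1).lt_or_eq with h | h
    · exact h
    · exfalso
      rw [← h] at hsum'
      have hx0 : x 0 = (n : ℝ) := by linarith
      have h0pos : 0 < x 0 := by linarith
      have := heq 0 h0pos i1
      norm_num [tauA, lin, hi1] at this
      linarith
  have hcost : cost n (lin n) α x
      = (x 0 * x 0 + ((n : ℝ) - 1) * (x i1 * x i1)) / n + α * x 0 / n := by
    simp only [cost, lin]
    rw [hsq]
  by_cases hx0 : 0 < x 0
  · -- interior case
    have h1 := heq 0 hx0 i1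
    norm_num [tauA, lin, hi1] at h1
    have h2 := heq i1 hypos 0
    norm_num [tauA, lin, hi1] at h2
    have hyval : x i1 = x 0 + α := by linarith
    have hx0val : x 0 = 1 - α * ((n : ℝ) - 1) / n := by
      rw [hyval] at hsum'
      field_simp
      nlinarith [hsum']
    have hmax : max (1 - α * ((n : ℝ) - 1) / n) 0 = 1 - α * ((n : ℝ) - 1) / n :=
      max_eq_left (by rw [← hx0val]; linarith)
    refine ⟨by rw [hmax, hx0val], fun i hi => ?_, ?_⟩
    · rw [hy i hi]
      field_simp
      linarith [hsum']
    · have hkey : α * ((n : ℝ) - 1) ≤ n := by nlinarith [hx0.le, hsum', hyval]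
      have hle : 1 + α / n ≤ (n : ℝ) / ((n : ℝ) - 1) := by
        have hrw : 1 + α / n = ((n : ℝ) + α) / n := by field_simp
        rw [hrw, div_le_div_iff₀ (by linarith) (by linarith)]
        nlinarith [hkey]
      have hsum2 := hsum'
      rw [hyval] at hsum2
      have hnum : x 0 * x 0 + ((n : ℝ) - 1) * (x i1 * x i1) + α * x 0
          = (n : ℝ) * (x 0 + α) := by
        rw [hyval]; linear_combination (x 0 + α) * hsum2
      have hc : cost n (lin n) α x = x 0 + α := by
        rw [hcost, ← add_div, hnum, mul_div_cancel_left₀ _ hn0]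
      rw [min_eq_right hle, hc, hx0val]
      field_simp
      ring
  · -- boundary case: x 0 = 0
    have hx00 : x 0 = 0 := le_antisymm (not_lt.mp hx0) (hpos 0)
    have hyval : x i1 = (n : ℝ) / ((n : ℝ) - 1) := by
      rw [eq_div_iff hn1]
      nlinarith [hsum']
    have h2 := heq i1 hypos 0
    norm_num [tauA, lin, hi1] at h2
    have hαbig : (n : ℝ) / ((n : ℝ) - 1) ≤ α := by
      rw [hx00] at h2; rw [← hyval]; linarith
    have hαbig' : (n : ℝ) ≤ α * ((n : ℝ) - 1) := by
      rw [div_le_iff₀ (by linarith)] at hαbig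
      linarith
    have hmax : max (1 - α * ((n : ℝ) - 1) / n) 0 = 0 := by
      apply max_eq_right
      rw [sub_nonpos, le_div_iff₀ (by linarith)]
      linarith
    refine ⟨by rw [hmax, hx00], fun i hi => ?_, ?_⟩
    · rw [hy i hi, hyval, hx00, sub_zero]
    · have hle : (n : ℝ) / ((n : ℝ) - 1) ≤ 1 + α / n := by
        have hrw : 1 + α / n = ((n : ℝ) + α) / n := by field_simp
        rw [hrw, div_le_div_iff₀ (by linarith) (by linarith)]
        nlinarith [hαbig']
      rw [min_eq_left hle, hcost, hx00, hyval]
      field_simp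
      ring
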